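/- Let f, g : [a,b] → ℝ, let c > 0 and let ε ∈ (0, c/2) satisfy sup_{t ∈ [a,b]} |f(t) − g(t)| ≤ ε. Then for every y ∈ ℝ, u_{c+2ε}^{y−ε}(g,[a,b]) ≤ u_c^y(f,[a,b]). -/

import Mathlib

open MeasureTheory Filter Set
open scoped ENNReal NNReal

noncomputable section

/-- The truncated variation `TTV^c(f,[a,b])`. -/
def TTV (f : ℝ → ℝ) (a b c : ℝ) : ℝ≥0∞ :=
  ⨆ (n : ℕ) (t : Fin (n + 1) → ℝ) (_ : StrictMono t) (_ : ∀ i, t i ∈ Set.Icc a b),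
    ∑ i : Fin n, ENNReal.ofReal (|f (t i.succ) - f (t i.castSucc)| - c)

/-- The upward truncated variation `UTV^c(f,[a,b])`. -/
def UTV (f : ℝ → ℝ) (a b c : ℝ) : ℝ≥0∞ :=
  ⨆ (n : ℕ) (t : Fin (n + 1) → ℝ) (_ : StrictMono t) (_ : ∀ i, t i ∈ Set.Icc a b),
    ∑ i : Fin n, ENNReal.ofReal (f (t i.succ) - f (t i.castSucc) - c)

/-- The downward truncated variation `DTV^c(f,[a,b])`. -/
def DTV (f : ℝ → ℝ) (a b c : ℝ) : ℝ≥0∞ :=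
  ⨆ (n : ℕ) (t : Fin (n + 1) → ℝ) (_ : StrictMono t) (_ : ∀ i, t i ∈ Set.Icc a b),
    ∑ i : Fin n, ENNReal.ofReal (f (t i.castSucc) - f (t i.succ) - c)

/-- The alternating sequence of hitting times used to count crossings: starting from `a`,
`crossingTimes f b p q a (n+1)` is the infimum (in `EReal`, so `inf ∅ = +∞`) of the times
`t ∈ (previous time, b]` at which `f t` satisfies `p` (for even `n`) or `q` (for odd `n`). -/
def crossingTimes (f : ℝ → ℝ) (b : ℝ) (p q : ℝ → Prop) (a : ℝ) : ℕ → EReal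
  | 0 => (a : EReal)
  | n + 1 =>
      sInf {x : EReal | ∃ t : ℝ, x = (t : EReal) ∧
        crossingTimes f b p q a n < (t : EReal) ∧ t ≤ b ∧
        (if n % 2 = 0 then p (f t) else q (f t))}

/-- `u_c^y(f,[a,b])`: the number of upcrossings by `f` of the segment `[y, y+c]` on `[a,b]`,
i.e. the largest `n` (possibly `∞`) such that `σ̃_n ≤ b`, where `σ̃₀ = a`,
`τ̃_n = inf{t ∈ (σ̃_n, b] : f t < y}` and `σ̃_{n+1} = inf{t ∈ (τ̃_n, b] : f t > y + c}`. -/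
def upcross (f : ℝ → ℝ) (a b c y : ℝ) : ℝ≥0∞ :=
  ⨆ (n : ℕ) (_ : crossingTimes f b (fun r => r < y) (fun r => y + c < r) a (2 * n) ≤ (b : EReal)),
    (n : ℝ≥0∞)

/-- `d_c^y(f,[a,b])`: the number of downcrossings by `f` of the segment `[y, y+c]` on `[a,b]`,
i.e. the largest `n` (possibly `∞`) such that `σ_n ≤ b`, where `σ₀ = a`,
`τ_n = inf{t ∈ (σ_n, b] : f t > y + c}` and `σ_{n+1} = inf{t ∈ (τ_n, b] : f t < y}`. -/
def downcross (f : ℝ → ℝ) (a b c y : ℝ) : ℝ≥0∞ :=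
  ⨆ (n : ℕ) (_ : crossingTimes f b (fun r => y + c < r) (fun r => r < y) a (2 * n) ≤ (b : EReal)),
    (n : ℝ≥0∞)

/-- A function is regulated on `[a,b]` if it has right limits on `[a,b)` and left limits
on `(a,b]`. -/
def Regulated (f : ℝ → ℝ) (a b : ℝ) : Prop :=
  (∀ t ∈ Set.Ico a b, ∃ L : ℝ, Tendsto f (nhdsWithin t (Set.Ioi t)) (nhds L)) ∧
  (∀ t ∈ Set.Ioc a b, ∃ L : ℝ, Tendsto f (nhdsWithin t (Set.Iio t)) (nhds L))

/-- A step function on `ℝ`: piecewise constant with respect to a finite partition of `ℝ`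
into intervals; equivalently, there is a finite set `s` such that the function is constant
on every interval avoiding `s`. -/
def IsStepFunction (g : ℝ → ℝ) : Prop :=
  ∃ s : Finset ℝ, ∀ x y : ℝ, x ≤ y → (∀ z ∈ Set.Icc x y, z ∉ s) → g x = g y

/-- A standard Brownian motion: continuous paths started at `0`, with independent increments,
the increment on `[s,t]` being centered Gaussian with variance `t - s`. -/
structure IsBrownianMotion {Ω : Type*} [MeasurableSpace Ω] (P : Measure Ω)
    (B : Ω → ℝ → ℝ) : Prop where
  isProb : IsProbabilityMeasure P
  cont : ∀ ω, ContinuousOn (B ω) (Set.Ici 0)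
  init : ∀ ω, B ω 0 = 0
  meas : ∀ t : ℝ, Measurable fun ω => B ω t
  indep : ∀ (n : ℕ) (t : Fin (n + 1) → ℝ), Monotone t → 0 ≤ t 0 →
    ProbabilityTheory.iIndepFun
      (fun i : Fin n => fun ω => B ω (t i.succ) - B ω (t i.castSucc)) P
  gauss : ∀ s t : ℝ, 0 ≤ s → s ≤ t →
    Measure.map (fun ω => B ω t - B ω s) P
      = ProbabilityTheory.gaussianReal 0 (Real.toNNReal (t - s))

/-- The exponential distribution with rate `v` (density `v * exp (-v*t)` on `[0,∞)`). -/
def expMeasure (v : ℝ) : Measure ℝ :=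
  volume.withDensity fun t => ENNReal.ofReal (if 0 ≤ t then v * Real.exp (-v * t) else 0)

end
lemma crossingTimes_ge_start (f : ℝ → ℝ) (b : ℝ) (p q : ℝ → Prop) (a : ℝ) :
    ∀ n, (a : EReal) ≤ crossingTimes f b p q a n := by
  intro n
  induction n with
  | zero => simp [crossingTimes]
  | succ n ih =>
    rw [crossingTimes]
    apply le_sInf
    rintro x ⟨t, rfl, ht, _, _⟩
    exact (lt_of_le_of_lt ih ht).le

lemma crossingTimes_mono_approx (a b c ε y : ℝ) (f g : ℝ → ℝ)
    (happrox : ∀ t ∈ Set.Icc a b, |f t - g t| ≤ ε) :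
    ∀ n, crossingTimes f b (fun r => r < y) (fun r => y + c < r) a n ≤
         crossingTimes g b (fun r => r < y - ε) (fun r => y - ε + (c + 2 * ε) < r) a n := by
  intro n
  induction n with
  | zero => simp [crossingTimes]
  | succ n ih =>
    rw [crossingTimes, crossingTimes]
    apply sInf_le_sInf
    rintro x ⟨t, rfl, ht, htb, hpred⟩
    have hta : (a : EReal) < (t : EReal) :=
      lt_of_le_of_lt (crossingTimes_ge_start g b _ _ a n) ht
    have hta' : a < t := by exact_mod_cast hta
    have habs := abs_le.mp (happrox t ⟨hta'.le, htb⟩)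
    refine ⟨t, rfl, lt_of_le_of_lt ih ht, htb, ?_⟩
    split_ifs at hpred ⊢ with h
    · linarith [habs.1, habs.2]
    · linarith [habs.1, habs.2]

/-- If `g` approximates `f` uniformly on `[a,b]` with accuracy `ε ∈ (0, c/2)`, then
`u_{c+2ε}^{y-ε}(g,[a,b]) ≤ u_c^y(f,[a,b])`. -/
theorem upcross_ge_of_uniform_approx (a b c ε y : ℝ) (f g : ℝ → ℝ) (hab : a < b)
    (hc : 0 < c) (hε : 0 < ε) (hεc : ε < c / 2)
    (happrox : ∀ t ∈ Set.Icc a b, |f t - g t| ≤ ε) :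
    upcross g a b (c + 2 * ε) (y - ε) ≤ upcross f a b c y := by
  refine iSup_le fun n => iSup_le fun hg => ?_
  have h := crossingTimes_mono_approx a b c ε y f g happrox (2 * n)
  exact le_iSup₂_of_le n (h.trans hg) le_rfl
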